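/- The second partial derivative of the call price C(t,s) = (s + (α/σ)e^{rt})Φ(d_{t,1}^α) - (Ke^{-r(T-t)} + (α/σ)e^{rt})Φ(d_{t,2}^α) with respect to s (the Gamma) equals e^{-(d_{t,1}^α)²/2} / ((s + (α/σ)e^{rt})·σ·√(2π(T-t))). -/

import Mathlib

open Real

/-- Standard normal CDF. -/
noncomputable def Phi (d : ℝ) : ℝ :=
  ∫ u in Set.Iic d, Real.exp (-u ^ 2 / 2) / Real.sqrt (2 * Real.pi)

/-- d_{t,1}^α of the crisis model. -/
noncomputable def d1 (s K σ α r t T : ℝ) : ℝ :=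
  (Real.log ((s + α / σ * Real.exp (r * t)) / (K + α / σ * Real.exp (r * T)))
    + (r + σ ^ 2 / 2) * (T - t)) / (σ * Real.sqrt (T - t))

/-- d_{t,2}^α of the crisis model. -/
noncomputable def d2 (s K σ α r t T : ℝ) : ℝ :=
  d1 s K σ α r t T - σ * Real.sqrt (T - t)

/-- Crisis-model European call price. -/
noncomputable def C (s K σ α r t T : ℝ) : ℝ :=
  (s + α / σ * Real.exp (r * t)) * Phi (d1 s K σ α r t T)
    - (K * Real.exp (-r * (T - t)) + α / σ * Real.exp (r * t)) * Phi (d2 s K σ α r t T)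

open MeasureTheory intervalIntegral in
lemma gauss_integrable : Integrable (fun u : ℝ => Real.exp (-u ^ 2 / 2) / Real.sqrt (2 * Real.pi)) := by
  have h := (integrable_exp_neg_mul_sq (by norm_num : (0:ℝ) < 1/2)).div_const (Real.sqrt (2 * Real.pi))
  refine h.congr (Filter.Eventually.of_forall fun u => ?_)
  show Real.exp (-(1/2:ℝ) * u ^ 2) / Real.sqrt (2 * Real.pi) = _
  rw [show -(1/2 : ℝ) * u ^ 2 = -u ^ 2 / 2 by ring]

open MeasureTheory intervalIntegral in
lemma hasDerivAt_Phi (d : ℝ) :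
    HasDerivAt Phi (Real.exp (-d ^ 2 / 2) / Real.sqrt (2 * Real.pi)) d := by
  have hcont : Continuous (fun u : ℝ => Real.exp (-u ^ 2 / 2) / Real.sqrt (2 * Real.pi)) := by
    continuity
  have key : ∀ x : ℝ, Phi x = Phi 0 + ∫ u in (0:ℝ)..x, Real.exp (-u ^ 2 / 2) / Real.sqrt (2 * Real.pi) := by
    intro x
    rw [← integral_Iic_sub_Iic gauss_integrable.integrableOn gauss_integrable.integrableOn]
    unfold Phi; ring
  have h := intervalIntegral.integral_hasDerivAt_right
      (gauss_integrable.intervalIntegrable (a := 0) (b := d))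
      (hcont.stronglyMeasurableAtFilter _ _) hcont.continuousAt
  have := h.const_add (Phi 0)
  exact this.congr_of_eventuallyEq (Filter.Eventually.of_forall fun x => (key x))

/-- Gamma of the crisis-model call: ∂²C/∂s² = e^{-(d₁)²/2}/((s + (α/σ)e^{rt})σ√(2π(T-t))). -/
theorem crisis_gamma (s K σ α r t T : ℝ)
    (hs : 0 < s) (hK : 0 < K) (hσ : 0 < σ) (hα : 0 ≤ α)
    (ht : 0 ≤ t) (htT : t < T)
    (h1 : 0 < s + α / σ * Real.exp (r * t))
    (h2 : 0 < K + α / σ * Real.exp (r * T)) :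
    HasDerivAt (deriv (fun x => C x K σ α r t T))
      (Real.exp (-(d1 s K σ α r t T) ^ 2 / 2) /
        ((s + α / σ * Real.exp (r * t)) * σ * Real.sqrt (2 * Real.pi * (T - t)))) s := by
  have hτ : 0 < T - t := sub_pos.2 htT
  have hsq : 0 < Real.sqrt (T - t) := Real.sqrt_pos.2 hτ
  have hσq : 0 < σ * Real.sqrt (T - t) := mul_pos hσ hsq
  -- derivative of d1 (and d2) in the spot variable
  have hd1 : ∀ x : ℝ, 0 < x + α / σ * Real.exp (r * t) →
      HasDerivAt (fun y => d1 y K σ α r t T)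
        (1 / ((x + α / σ * Real.exp (r * t)) * (σ * Real.sqrt (T - t)))) x := by
    intro x hx
    have hnear : ∀ᶠ y in nhds x, 0 < y + α / σ * Real.exp (r * t) := by
      have h' : ∀ᶠ y in nhds x, -(α / σ * Real.exp (r * t)) < y :=
        eventually_gt_nhds (by linarith)
      filter_upwards [h'] with y hy; linarith
    have hid : HasDerivAt (fun y : ℝ => y + α / σ * Real.exp (r * t)) 1 x :=
      (hasDerivAt_id x).add_const _
    have hlog1 : HasDerivAt (fun y : ℝ => Real.log (y + α / σ * Real.exp (r * t)))
        (1 / (x + α / σ * Real.exp (r * t))) x := by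
      exact ((Real.hasDerivAt_log hx.ne').comp x hid).congr_deriv
        (by rw [mul_one, one_div] : (x + α / σ * Real.exp (r * t))⁻¹ * 1 = 1 / (x + α / σ * Real.exp (r * t)))
    have hlog : HasDerivAt
        (fun y : ℝ => Real.log ((y + α / σ * Real.exp (r * t)) / (K + α / σ * Real.exp (r * T))))
        (1 / (x + α / σ * Real.exp (r * t))) x := by
      refine (hlog1.sub_const (Real.log (K + α / σ * Real.exp (r * T)))).congr_of_eventuallyEq ?_
      filter_upwards [hnear] with y hy
      rw [Real.log_div hy.ne' h2.ne']
    have := (hlog.add_const ((r + σ ^ 2 / 2) * (T - t))).div_const (σ * Real.sqrt (T - t))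
    have h' : 1 / (x + α / σ * Real.exp (r * t)) / (σ * Real.sqrt (T - t))
        = 1 / ((x + α / σ * Real.exp (r * t)) * (σ * Real.sqrt (T - t))) := by
      rw [div_div]
    rw [h'] at this
    exact this
  have hd2 : ∀ x : ℝ, 0 < x + α / σ * Real.exp (r * t) →
      HasDerivAt (fun y => d2 y K σ α r t T)
        (1 / ((x + α / σ * Real.exp (r * t)) * (σ * Real.sqrt (T - t)))) x := by
    intro x hx
    exact (hd1 x hx).sub_const (σ * Real.sqrt (T - t))
  -- Delta: derivative of the price is Phi (d1)
  have hC : ∀ x : ℝ, 0 < x + α / σ * Real.exp (r * t) →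
      HasDerivAt (fun y => C y K σ α r t T) (Phi (d1 x K σ α r t T)) x := by
    intro x hx
    have hP1 := (hasDerivAt_Phi (d1 x K σ α r t T)).comp x (hd1 x hx)
    have hP2 := (hasDerivAt_Phi (d2 x K σ α r t T)).comp x (hd2 x hx)
    have hA : HasDerivAt (fun y => (y + α / σ * Real.exp (r * t)) * Phi (d1 y K σ α r t T))
        (1 * Phi (d1 x K σ α r t T) + (x + α / σ * Real.exp (r * t)) *
          (Real.exp (-(d1 x K σ α r t T) ^ 2 / 2) / Real.sqrt (2 * Real.pi) *
            (1 / ((x + α / σ * Real.exp (r * t)) * (σ * Real.sqrt (T - t)))))) x :=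
      ((hasDerivAt_id x).add_const _).mul hP1
    have hB : HasDerivAt
        (fun y => (K * Real.exp (-r * (T - t)) + α / σ * Real.exp (r * t)) * Phi (d2 y K σ α r t T))
        ((K * Real.exp (-r * (T - t)) + α / σ * Real.exp (r * t)) *
          (Real.exp (-(d2 x K σ α r t T) ^ 2 / 2) / Real.sqrt (2 * Real.pi) *
            (1 / ((x + α / σ * Real.exp (r * t)) * (σ * Real.sqrt (T - t)))))) x :=
      hP2.const_mul _
    -- key identity
    have hD1q : d1 x K σ α r t T * (σ * Real.sqrt (T - t))
        = Real.log ((x + α / σ * Real.exp (r * t)) / (K + α / σ * Real.exp (r * T)))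
          + (r + σ ^ 2 / 2) * (T - t) := div_mul_cancel₀ _ hσq.ne'
    have hq2 : (σ * Real.sqrt (T - t)) ^ 2 = σ ^ 2 * (T - t) := by
      rw [mul_pow, Real.sq_sqrt hτ.le]
    have hexp2 : -(d2 x K σ α r t T) ^ 2 / 2
        = -(d1 x K σ α r t T) ^ 2 / 2
          + Real.log ((x + α / σ * Real.exp (r * t)) / (K + α / σ * Real.exp (r * T)))
          + r * (T - t) := by
      simp only [d2]
      linear_combination hD1q - (1/2) * hq2
    have hE2 : Real.exp (-(d2 x K σ α r t T) ^ 2 / 2)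
        = Real.exp (-(d1 x K σ α r t T) ^ 2 / 2) *
            ((x + α / σ * Real.exp (r * t)) / (K + α / σ * Real.exp (r * T))) *
            Real.exp (r * (T - t)) := by
      rw [hexp2, Real.exp_add, Real.exp_add, Real.exp_log (div_pos hx h2)]
    have hee : Real.exp (-r * (T - t)) * Real.exp (r * (T - t)) = 1 := by
      rw [← Real.exp_add, show -r * (T - t) + r * (T - t) = 0 by ring, Real.exp_zero]
    have hAe : K * Real.exp (-r * (T - t)) + α / σ * Real.exp (r * t)
        = Real.exp (-r * (T - t)) * (K + α / σ * Real.exp (r * T)) := by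
      have h3 : Real.exp (-r * (T - t)) * Real.exp (r * T) = Real.exp (r * t) := by
        rw [← Real.exp_add]; congr 1; ring
      linear_combination (-(α / σ)) * h3
    have hker : (x + α / σ * Real.exp (r * t)) * Real.exp (-(d1 x K σ α r t T) ^ 2 / 2)
        = (K * Real.exp (-r * (T - t)) + α / σ * Real.exp (r * t)) *
            Real.exp (-(d2 x K σ α r t T) ^ 2 / 2) := by
      rw [hE2, hAe, div_eq_mul_inv]
      have hKB : (K + α / σ * Real.exp (r * T)) * (K + α / σ * Real.exp (r * T))⁻¹ = 1 :=
        mul_inv_cancel₀ h2.ne'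
      linear_combination
        (-(Real.exp (-(d1 x K σ α r t T) ^ 2 / 2) * (x + α / σ * Real.exp (r * t))
            * ((K + α / σ * Real.exp (r * T)) * (K + α / σ * Real.exp (r * T))⁻¹))) * hee
        + (-(Real.exp (-(d1 x K σ α r t T) ^ 2 / 2) * (x + α / σ * Real.exp (r * t)))) * hKB
    have hsum := hA.sub hB
    have hfun : (fun y => (y + α / σ * Real.exp (r * t)) * Phi (d1 y K σ α r t T)
        - (K * Real.exp (-r * (T - t)) + α / σ * Real.exp (r * t)) * Phi (d2 y K σ α r t T))
        = fun y => C y K σ α r t T := by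
      funext y; simp only [C]
    replace hsum : HasDerivAt (fun y => C y K σ α r t T) _ x := hsum
    convert hsum using 1
    linear_combination
      (-(Real.sqrt (2 * Real.pi))⁻¹ * ((x + α / σ * Real.exp (r * t)) * (σ * Real.sqrt (T - t)))⁻¹)
        * hker
  -- eventual equality of deriv C with Phi ∘ d1
  have hpos : ∀ᶠ x in nhds s, 0 < x + α / σ * Real.exp (r * t) := by
    have h' : ∀ᶠ x in nhds s, -(α / σ * Real.exp (r * t)) < x :=
      eventually_gt_nhds (by linarith)
    filter_upwards [h'] with x hx; linarith
  have hEq : deriv (fun x => C x K σ α r t T) =ᶠ[nhds s] fun x => Phi (d1 x K σ α r t T) := by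
    filter_upwards [hpos] with x hx
    exact (hC x hx).deriv
  have hmain : HasDerivAt (fun x => Phi (d1 x K σ α r t T))
      (Real.exp (-(d1 s K σ α r t T) ^ 2 / 2) /
        ((s + α / σ * Real.exp (r * t)) * σ * Real.sqrt (2 * Real.pi * (T - t)))) s := by
    have h := (hasDerivAt_Phi (d1 s K σ α r t T)).comp s (hd1 s h1)
    replace h : HasDerivAt (fun x => Phi (d1 x K σ α r t T)) _ s := h
    convert h using 1
    rw [Real.sqrt_mul (by positivity : (0:ℝ) ≤ 2 * Real.pi) (T - t)]
    field_simp
  exact hmain.congr_of_eventuallyEq hEq
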